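/- Let N ≥ 1 and let A ∈ ℝ^{(N+1)×(N+1)} be an adjacency matrix with nonnegative entries, zero diagonal, and zero first row (A(0,j) = 0 for all j), where index 0 represents the leader and an edge from node j to node i exists exactly when A(i,j) > 0. Let D ∈ ℝ^{(N+1)×(N+1)} be the diagonal in-degree matrix with D(i,i) = Σ_j A(i,j), let L = D − A be the Laplacian, and let H ∈ ℝ^{N×N} be the leader-follower matrix obtained from L by deleting the row and the column of index 0. If the leader is a root of the graph, i.e., for every node i ≠ 0 there exists k ≥ 1 with (A^k)(i,0) > 0, then every eigenvalue λ ∈ ℂ of H satisfies Re λ > 0. -/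

import Mathlib

open Matrix Polynomial

lemma my_eval_charpoly {n : Type*} [Fintype n] [DecidableEq n] {R : Type*} [CommRing R]
    (M : Matrix n n R) (μ : R) : M.charpoly.eval μ = (μ • (1 : Matrix n n R) - M).det := by
  rw [Matrix.charpoly, ← Polynomial.coe_evalRingHom, RingHom.map_det]
  congr 1
  ext i j
  by_cases h : i = j <;>
    simp [h, charmatrix_apply_eq, charmatrix_apply_ne, Matrix.one_apply, Matrix.smul_apply]

lemma my_pow_nonneg {n : ℕ} (A : Matrix (Fin n) (Fin n) ℝ) (hA : ∀ i j, 0 ≤ A i j) :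
    ∀ k i j, 0 ≤ (A ^ k) i j := by
  intro k
  induction k with
  | zero => intro i j; by_cases h : i = j <;> simp [h, Matrix.one_apply]
  | succ k ih =>
    intro i j
    rw [pow_succ, Matrix.mul_apply]
    exact Finset.sum_nonneg fun x _ => mul_nonneg (ih i x) (hA x j)

/-- reachability propagation of the max value -/
lemma my_reach {n : ℕ} (A : Matrix (Fin (n + 1)) (Fin (n + 1)) ℝ) (hA : ∀ i j, 0 ≤ A i j)
    (y : Fin (n + 1) → ℝ) (M : ℝ)
    (hstep : ∀ i j, y i = M → 0 < A i j → y j = M) :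
    ∀ k i, 0 < (A ^ k) i 0 → y i = M → y 0 = M := by
  intro k
  induction k with
  | zero =>
    intro i h hi
    rw [pow_zero] at h
    by_cases hi0 : i = (0 : Fin (n + 1))
    · rwa [hi0] at hi
    · simp [Matrix.one_apply, hi0] at h
  | succ k ih =>
    intro i h hi
    rw [pow_succ', Matrix.mul_apply] at h
    have : ∃ j ∈ Finset.univ, (0 : ℝ) < A i j * (A ^ k) j 0 := by
      by_contra hc
      push_neg at hc
      have : ∑ j, A i j * (A ^ k) j 0 ≤ 0 :=
        Finset.sum_nonpos fun j _ => hc j (Finset.mem_univ j)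
      linarith
    obtain ⟨j, -, hj⟩ := this
    have h1 : 0 < A i j := by
      rcases lt_or_ge 0 (A i j) with h'|h'
      · exact h'
      · exfalso
        have := mul_nonpos_of_nonpos_of_nonneg h' (my_pow_nonneg A hA k j 0)
        linarith
    have h2 : 0 < (A ^ k) j 0 := by
      by_contra h'
      push_neg at h'
      have := mul_nonpos_of_nonneg_of_nonpos (hA i j) h'
      linarith
    exact ih j h2 (hstep i j hi h1)

theorem leader_follower_eigenvalues_pos_re
    (N : ℕ) (hN : 1 ≤ N)
    (A : Matrix (Fin (N + 1)) (Fin (N + 1)) ℝ)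
    (hA_nonneg : ∀ i j, 0 ≤ A i j)
    (hA_diag : ∀ i, A i i = 0)
    (hA_row0 : ∀ j, A 0 j = 0)
    (D : Matrix (Fin (N + 1)) (Fin (N + 1)) ℝ)
    (hD : D = Matrix.diagonal fun i => ∑ j, A i j)
    (L : Matrix (Fin (N + 1)) (Fin (N + 1)) ℝ)
    (hL : L = D - A)
    (H : Matrix (Fin N) (Fin N) ℝ)
    (hH : H = Matrix.of fun i j => L i.succ j.succ)
    (hroot : ∀ i : Fin (N + 1), i ≠ 0 → ∃ k : ℕ, 1 ≤ k ∧ 0 < (A ^ k) i 0) :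
    ∀ μ : ℂ, (H.map Complex.ofReal).charpoly.IsRoot μ → 0 < μ.re := by
  -- degree function
  set d : Fin (N + 1) → ℝ := fun i => ∑ j, A i j with hd
  -- entries of H
  have hHe : ∀ i j, H i j = (if i = j then d i.succ else 0) - A i.succ j.succ := by
    intro i j
    rw [hH, hL, hD]
    simp [Matrix.diagonal_apply, Fin.succ_inj]
  -- key: nonpositivity of any vector in ker L vanishing at 0
  have key : ∀ y : Fin (N + 1) → ℝ, L.mulVec y = 0 → y 0 = 0 → ∀ i, y i ≤ 0 := by
    intro y hy hy0 i
    obtain ⟨i₀, -, hmax⟩ := Finset.exists_max_image Finset.univ y ⟨0, Finset.mem_univ 0⟩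
    set M := y i₀ with hM
    have hle : ∀ j, y j ≤ M := fun j => hmax j (Finset.mem_univ j)
    -- step lemma
    have hstep : ∀ p q, y p = M → 0 < A p q → y q = M := by
      intro p q hp hq
      have hrow : (L.mulVec y) p = 0 := by rw [hy]; rfl
      have hexp : (L.mulVec y) p = ∑ k, A p k * (y p - y k) := by
        rw [hL, hD, Matrix.sub_mulVec, Pi.sub_apply, Matrix.mulVec_diagonal,
          Matrix.mulVec, dotProduct]
        have hdp : d p * y p = ∑ k, A p k * y p := by
          rw [← Finset.sum_mul]
        rw [hdp, ← Finset.sum_sub_distrib]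
        exact Finset.sum_congr rfl fun k _ => by ring
      have hsum : ∑ k, A p k * (y p - y k) = 0 := by rw [← hexp, hrow]
      have hnn : ∀ k ∈ Finset.univ, 0 ≤ A p k * (y p - y k) := by
        intro k _
        apply mul_nonneg (hA_nonneg p k)
        have := hle k
        rw [hp]; linarith
      have := (Finset.sum_eq_zero_iff_of_nonneg hnn).mp hsum q (Finset.mem_univ q)
      have h2 : y p - y q = 0 := by
        rcases mul_eq_zero.mp this with h | h
        · exact absurd h (ne_of_gt hq)
        · exact h
      rw [← hp]; linarith
    have hM0 : M = 0 := by
      by_cases h0 : i₀ = 0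
      · rw [hM, h0, hy0]
      · obtain ⟨k, -, hk⟩ := hroot i₀ h0
        have := my_reach A hA_nonneg y M hstep k i₀ hk rfl
        rw [← this, hy0]
      -- done
    calc y i ≤ M := hle i
    _ = 0 := hM0
  -- L row structure at succ indices
  have hLrow : ∀ (y : Fin (N + 1) → ℝ) (i : Fin N),
      (L.mulVec y) i.succ = d i.succ * y i.succ - ∑ k, A i.succ k * y k := by
    intro y i
    rw [hL, hD, Matrix.sub_mulVec, Pi.sub_apply, Matrix.mulVec_diagonal,
      Matrix.mulVec, dotProduct]
  -- det H ≠ 0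
  have hdet : H.det ≠ 0 := by
    intro hdet0
    obtain ⟨x, hx0, hx⟩ := (Matrix.exists_mulVec_eq_zero_iff).mpr hdet0
    set y : Fin (N + 1) → ℝ := fun i => Fin.cases 0 x i with hydef
    have hy0 : y 0 = 0 := rfl
    have hLy : L.mulVec y = 0 := by
      funext i
      refine Fin.cases ?_ ?_ i
      · -- row 0 of L is zero
        rw [hL, hD, Matrix.sub_mulVec, Pi.sub_apply, Matrix.mulVec_diagonal,
          Matrix.mulVec, dotProduct]
        have h1 : d 0 = 0 := by
          rw [hd]; exact Finset.sum_eq_zero fun j _ => hA_row0 j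
        have h2 : ∑ k, A 0 k * y k = 0 := Finset.sum_eq_zero fun k _ => by
          rw [hA_row0 k, zero_mul]
        show d 0 * y 0 - ∑ k, A 0 k * y k = 0
        rw [h1, h2]; ring
      · intro i
        rw [hLrow y i]
        have hx' : (H.mulVec x) i = 0 := by rw [hx]; rfl
        have hHx : (H.mulVec x) i = d i.succ * x i - ∑ j, A i.succ j.succ * x j := by
          rw [Matrix.mulVec, dotProduct]
          have : ∀ j, H i j * x j =
              (if i = j then d i.succ * x j else 0) - A i.succ j.succ * x j := by
            intro j
            rw [hHe i j]
            by_cases h : i = j <;> simp [h] <;> ring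
          rw [Finset.sum_congr rfl fun j _ => this j, Finset.sum_sub_distrib,
            Finset.sum_ite_eq Finset.univ i (fun j => d i.succ * x j)]
          simp
        have hsum : ∑ k, A i.succ k * y k = ∑ j, A i.succ j.succ * x j := by
          rw [Fin.sum_univ_succ]
          simp [hydef]
        have : y i.succ = x i := rfl
        rw [this, hsum]
        show d i.succ * x i - ∑ j, A i.succ j.succ * x j = 0
        rw [← hHx, hx']
    have hyneg : ∀ i, y i ≤ 0 := key y hLy hy0
    have hypos : ∀ i, 0 ≤ y i := by
      intro i
      have hLy' : L.mulVec (-y) = 0 := by rw [Matrix.mulVec_neg, hLy]; simp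
      have := key (-y) hLy' (by simp [hy0]) i
      simpa using this
    apply hx0
    funext i
    have := le_antisymm (hyneg i.succ) (hypos i.succ)
    exact this
  -- now the complex part
  intro μ hμ
  set B := H.map (Complex.ofReal) with hB
  have hdetB : B.det ≠ 0 := by
    have hcast : B.det = (H.det : ℂ) := by
      rw [hB, show (Complex.ofReal : ℝ → ℂ) = ⇑Complex.ofRealHom from rfl,
        ← RingHom.mapMatrix_apply, ← RingHom.map_det]
    rw [hcast]
    exact Complex.ofReal_ne_zero.mpr hdet
  have hμ0 : μ ≠ 0 := by
    intro h
    rw [Polynomial.IsRoot, my_eval_charpoly, h] at hμ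
    rw [zero_smul, zero_sub, Matrix.det_neg] at hμ
    rcases mul_eq_zero.mp hμ with h' | h'
    · exact pow_ne_zero _ (by norm_num : (-1 : ℂ) ≠ 0) h'
    · exact hdetB h'
  rw [Polynomial.IsRoot, my_eval_charpoly] at hμ
  obtain ⟨v, hv0, hv⟩ := (Matrix.exists_mulVec_eq_zero_iff).mpr hμ
  -- eigen equation: B.mulVec v = μ • v
  have heig : ∀ i, ∑ j, (H i j : ℂ) * v j = μ * v i := by
    intro i
    have := congrFun hv i
    rw [Matrix.sub_mulVec, Pi.sub_apply, Pi.zero_apply, sub_eq_zero] at this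
    have h1 : ((μ • (1 : Matrix (Fin N) (Fin N) ℂ)).mulVec v) i = μ * v i := by
      rw [Matrix.smul_mulVec, Matrix.one_mulVec]; rfl
    have h2 : (B.mulVec v) i = ∑ j, (H i j : ℂ) * v j := by
      rw [Matrix.mulVec, dotProduct]; rfl
    rw [← h2, ← h1, this]
  -- argmax of |v|
  have : Nonempty (Fin N) := ⟨⟨0, hN⟩⟩
  obtain ⟨i₀, -, hmax⟩ := Finset.exists_max_image Finset.univ (fun i => ‖v i‖)
    Finset.univ_nonempty
  have hle : ∀ j, ‖v j‖ ≤ ‖v i₀‖ :=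
    fun j => hmax j (Finset.mem_univ j)
  have hr : 0 < ‖v i₀‖ := by
    by_contra h
    push_neg at h
    apply hv0
    funext j
    have := le_antisymm (le_trans (hle j) h) (norm_nonneg _)
    exact norm_eq_zero.mp this
  set r := ‖v i₀‖ with hrdef
  set δ := d i₀.succ with hδ
  -- (δ - μ) * v i₀ = ∑ a j v j
  have hAij : ∀ j, ((if i₀ = j then δ else 0 : ℝ) : ℂ) * v j - (A i₀.succ j.succ : ℂ) * v j
      = (H i₀ j : ℂ) * v j := by
    intro j
    rw [hHe i₀ j]
    push_cast
    ring
  have hkey : ((δ : ℂ) - μ) * v i₀ = ∑ j, (A i₀.succ j.succ : ℂ) * v j := by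
    have h1 : ∑ j, (H i₀ j : ℂ) * v j =
        (δ : ℂ) * v i₀ - ∑ j, (A i₀.succ j.succ : ℂ) * v j := by
      rw [← Finset.sum_congr rfl fun j _ => hAij j, Finset.sum_sub_distrib]
      congr 1
      have : ∀ j, ((if i₀ = j then δ else 0 : ℝ) : ℂ) * v j
          = if i₀ = j then (δ : ℂ) * v j else 0 := by
        intro j; by_cases h : i₀ = j <;> simp [h]
      rw [Finset.sum_congr rfl fun j _ => this j,
        Finset.sum_ite_eq Finset.univ i₀ (fun j => (δ : ℂ) * v j)]
      simp
    have h2 := heig i₀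
    rw [h1] at h2
    linear_combination h2
  -- bound
  have hsum_nonneg : ∀ j : Fin N, 0 ≤ A i₀.succ j.succ := fun j => hA_nonneg _ _
  have hbound : ‖(δ : ℂ) - μ‖ * r ≤ δ * r := by
    calc ‖(δ : ℂ) - μ‖ * r = ‖((δ : ℂ) - μ) * v i₀‖ := by
          rw [norm_mul]
      _ = ‖∑ j, (A i₀.succ j.succ : ℂ) * v j‖ := by rw [hkey]
      _ ≤ ∑ j : Fin N, ‖(A i₀.succ (Fin.succ j) : ℂ) * v j‖ :=
          norm_sum_le _ _
      _ = ∑ j : Fin N, A i₀.succ (Fin.succ j) * ‖v j‖ := by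
          refine Finset.sum_congr rfl fun j _ => ?_
          rw [norm_mul, Complex.norm_real, Real.norm_eq_abs, abs_of_nonneg (hsum_nonneg j)]
      _ ≤ ∑ j : Fin N, A i₀.succ (Fin.succ j) * r := by
          refine Finset.sum_le_sum fun j _ => ?_
          exact mul_le_mul_of_nonneg_left (hle j) (hsum_nonneg j)
      _ = (∑ j : Fin N, A i₀.succ (Fin.succ j)) * r := by rw [Finset.sum_mul]
      _ ≤ δ * r := by
          apply mul_le_mul_of_nonneg_right _ (le_of_lt hr)
          have hδval : d i₀.succ = A i₀.succ 0 + ∑ j : Fin N, A i₀.succ (Fin.succ j) :=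
            Fin.sum_univ_succ _
          rw [hδ, hδval]
          have := hA_nonneg i₀.succ 0
          linarith
  have hδnn : 0 ≤ δ := by
    rw [hδ, hd]
    exact Finset.sum_nonneg fun j _ => hA_nonneg _ _
  have habs : ‖(δ : ℂ) - μ‖ ≤ δ :=
    le_of_mul_le_mul_right (by linarith [hbound]) hr
  -- square it
  have hsq : (δ - μ.re) ^ 2 + μ.im ^ 2 ≤ δ ^ 2 := by
    have h1 : ‖(δ : ℂ) - μ‖ ^ 2 = (δ - μ.re) ^ 2 + μ.im ^ 2 := by
      rw [Complex.sq_norm, Complex.normSq_apply]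
      simp [Complex.sub_re, Complex.sub_im, Complex.ofReal_re, Complex.ofReal_im]
      ring
    nlinarith [norm_nonneg ((δ : ℂ) - μ)]
  have hμnorm : 0 < μ.re ^ 2 + μ.im ^ 2 := by
    have := Complex.normSq_pos.mpr hμ0
    rw [Complex.normSq_apply] at this
    nlinarith
  nlinarith [hsq, hμnorm, hδnn]
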